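/- arXiv:1402.4178 — 4 statements merged into one kernel-verified Lean document; each statement's English description precedes it below -/
import Mathlib

section
/- Let a_1,…,a_m be positive integers with a_1 + ⋯ + a_m = 2B. Consider stockpiles on a pad of length 6B with travel speed s = 5B: two stockpiles of length 2B at [0,2B] and [4B,6B], and stockpiles of lengths a_1,…,a_m placed contiguously on [2B, 4B]. Then these stockpiles can be partitioned into two sets with total length 3B each if and only if there exists an index set I ⊆ {1,…,m} with Σ_{i∈I} a_i = B. -/
lemma split_sum {m B : ℕ} (a : Fin m → ℕ) (S : Finset (Fin m ⊕ Fin 2)) :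
    ∑ i ∈ S, Sum.elim a (fun _ => 2 * B) i
      = ∑ i ∈ S.toLeft, a i + S.toRight.card * (2 * B) := by
  conv_lhs => rw [← Finset.toLeft_disjSum_toRight (u := S)]
  rw [Finset.sum_disjSum]
  simp [Finset.sum_const, mul_comm]

/-- Partition-reduction instance: stockpiles are the `m` small stockpiles of lengths
`a i` together with two stockpiles of length `2B`.  They can be split into two sets
each of total length `3B` iff the Partition instance is a YES-instance. -/
theorem stmt1 (m B : ℕ) (hB : 0 < B) (a : Fin m → ℕ) (ha : ∀ i, 0 < a i)
    (hsum : ∑ i, a i = 2 * B) :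
    (∃ S : Finset (Fin m ⊕ Fin 2),
        ∑ i ∈ S, Sum.elim a (fun _ => 2 * B) i = 3 * B ∧
        ∑ i ∈ Sᶜ, Sum.elim a (fun _ => 2 * B) i = 3 * B) ↔
    (∃ I : Finset (Fin m), ∑ i ∈ I, a i = B) := by
  constructor
  · rintro ⟨S, hS, -⟩
    refine ⟨S.toLeft, ?_⟩
    rw [split_sum] at hS
    have hle : ∑ i ∈ S.toLeft, a i ≤ 2 * B := by
      rw [← hsum]; exact Finset.sum_le_sum_of_subset (Finset.subset_univ _)
    have hcard : S.toRight.card ≤ 2 := by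
      simpa using Finset.card_le_card (Finset.subset_univ S.toRight)
    interval_cases h : S.toRight.card <;> omega
  · rintro ⟨I, hI⟩
    refine ⟨I.disjSum ({0} : Finset (Fin 2)), ?_, ?_⟩
    · rw [split_sum]; simp [hI]; ring
    · have htot : ∑ i : Fin m ⊕ Fin 2, Sum.elim a (fun _ => 2 * B) i = 6 * B := by
        rw [Fintype.sum_sum_type]; simp [hsum]; ring
      have h1 : ∑ i ∈ I.disjSum ({0} : Finset (Fin 2)), Sum.elim a (fun _ => 2 * B) i = 3 * B := by
        rw [split_sum]; simp [hI]; ring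
      have := Finset.sum_add_sum_compl (I.disjSum ({0} : Finset (Fin 2)))
        (Sum.elim a (fun _ => 2 * B))
      omega
end

section
/- Let E = [a_1,b_1] ∪ ⋯ ∪ [a_r,b_r] be a finite union of pairwise disjoint closed intervals in [0,L], and let f, g : [0,L] → ℝ satisfy f + g = 2K₀, f strictly increasing, g strictly decreasing, with unique x* satisfying f(x*) = g(x*) = K₀. Define K_i = max{f(a_i), g(b_i)} for i = 1,…,r and K* = min{K₀, K_1, …, K_r}. If x* ∉ E then K* = K₀, and if x* ∈ [a_i, b_i] for some i then K* = K_i. -/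
/-- Identification of the optimal preemptive makespan `K*` among `K₀, K_1, …, K_r`. -/
theorem stmt3 (L K₀ : ℝ) (hL : 0 ≤ L) (r : ℕ) (a b : Fin r → ℝ)
    (hab : ∀ i, 0 ≤ a i ∧ a i ≤ b i ∧ b i ≤ L)
    (hdisj : ∀ i j, i ≠ j → Disjoint (Set.Icc (a i) (b i)) (Set.Icc (a j) (b j)))
    (f g : ℝ → ℝ)
    (hsum : ∀ x ∈ Set.Icc 0 L, f x + g x = 2 * K₀)
    (hfm : StrictMonoOn f (Set.Icc 0 L)) (hga : StrictAntiOn g (Set.Icc 0 L))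
    (xstar : ℝ) (hx : xstar ∈ Set.Icc 0 L)
    (hfx : f xstar = K₀) (hgx : g xstar = K₀)
    (huniq : ∀ y ∈ Set.Icc 0 L, f y = K₀ → g y = K₀ → y = xstar)
    (Kstar : ℝ)
    (hKstar : Kstar = Finset.univ.inf'
      (Finset.univ_nonempty (α := Option (Fin r)))
      (fun o => Option.elim o K₀ (fun i => max (f (a i)) (g (b i))))) :
    (xstar ∉ ⋃ i, Set.Icc (a i) (b i) → Kstar = K₀) ∧
    (∀ i, xstar ∈ Set.Icc (a i) (b i) → Kstar = max (f (a i)) (g (b i))) := by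
  have hmem : ∀ i, a i ∈ Set.Icc (0:ℝ) L ∧ b i ∈ Set.Icc (0:ℝ) L := by
    intro i
    obtain ⟨h1, h2, h3⟩ := hab i
    exact ⟨⟨h1, le_trans h2 h3⟩, ⟨le_trans h1 h2, h3⟩⟩
  -- if xstar is not in interval i, then K_i ≥ K₀
  have key : ∀ i, xstar ∉ Set.Icc (a i) (b i) → K₀ ≤ max (f (a i)) (g (b i)) := by
    intro i hni
    rw [Set.mem_Icc, not_and_or, not_le, not_le] at hni
    rcases hni with h | h
    · have := hfm hx (hmem i).1 h
      rw [hfx] at this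
      exact le_max_of_le_left this.le
    · have := hga (hmem i).2 hx h
      rw [hgx] at this
      exact le_max_of_le_right this.le
  -- if xstar ∈ interval i, then K_i ≤ K₀
  have key2 : ∀ i, xstar ∈ Set.Icc (a i) (b i) → max (f (a i)) (g (b i)) ≤ K₀ := by
    intro i ⟨h1, h2⟩
    refine max_le ?_ ?_
    · calc f (a i) ≤ f xstar := hfm.monotoneOn (hmem i).1 hx h1
      _ = K₀ := hfx
    · calc g (b i) ≤ g xstar := hga.antitoneOn hx (hmem i).2 h2
      _ = K₀ := hgx
  constructor
  · intro hnot
    rw [Set.mem_iUnion] at hnot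
    push_neg at hnot
    rw [hKstar]
    apply le_antisymm
    · exact Finset.inf'_le _ (Finset.mem_univ (none : Option (Fin r)))
    · apply Finset.le_inf'
      intro o _
      match o with
      | none => exact le_refl _
      | some i => exact key i (hnot i)
  · intro i hin
    rw [hKstar]
    apply le_antisymm
    · exact Finset.inf'_le _ (Finset.mem_univ (some i))
    · apply Finset.le_inf'
      intro o _
      match o with
      | none => exact key2 i hin
      | some j =>
        by_cases hij : i = j
        · subst hij; exact le_refl _
        · have hnj : xstar ∉ Set.Icc (a j) (b j) := by
            intro hj
            exact (hdisj i j hij).ne_of_mem hin hj rfl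
          exact le_trans (key2 i hin) (key j hnj)
end

section
/- For a single reclaimer with positioning decisions and a fixed reclaim order, assuming p_1 + ⋯ + p_n ≤ 3L/2, for any placement of the stockpiles on two pads of length L and any feasible schedule of one reclaimer starting and ending at 0, the makespan C satisfies C ≥ P + min_{0 ≤ k ≤ n} |P^k − P̄^k| / s, where P = Σ p_i, P^k = Σ_{i≤k} p_i, P̄^k = P − P^k. -/
open MeasureTheory Set Finset


/-- `H` traverses the interval `[a,b]` at speed 1 starting at time `t₁`,
either left-to-right or right-to-left. -/
def Traverses (H : ℝ → ℝ) (t₁ a b : ℝ) : Prop :=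
  (∀ u ∈ Set.Icc t₁ (t₁ + (b - a)), H u = a + (u - t₁)) ∨
  (∀ u ∈ Set.Icc t₁ (t₁ + (b - a)), H u = b - (u - t₁))

lemma parity_flips (g : ℕ → Bool) (N : ℕ) (h0 : g 0 = false) (h1 : g N = true) :
    Odd ((Finset.range N).filter (fun j => g j ≠ g (j+1))).card := by
  have key : ∀ M : ℕ, (Odd ((Finset.range M).filter (fun j => g j ≠ g (j+1))).card ↔ g 0 ≠ g M) := by
    intro M
    induction M with
    | zero => simp
    | succ M ih =>
      rw [Finset.range_add_one, Finset.filter_insert]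
      by_cases h : g M ≠ g (M+1)
      · rw [if_pos h, Finset.card_insert_of_notMem (by simp)]
        rw [Nat.odd_add_one, ih]
        revert h
        cases hh0 : g 0 <;> cases hhM : g M <;> cases hhM1 : g (M+1) <;> simp
      · rw [if_neg h]
        simp only [ne_eq, not_not] at h
        rw [ih, h]
  rw [key, h0, h1]; simp

lemma flip_of_mem (a b y : ℝ) (h : min a b < y ∧ y < max a b) : ¬ ((y < a) ↔ (y < b)) := by
  rcases le_total a b with hab | hab
  · rw [min_eq_left hab, max_eq_right hab] at h
    intro hiff; exact absurd (hiff.mpr h.2) (not_lt.mpr h.1.le)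
  · rw [min_eq_right hab, max_eq_left hab] at h
    intro hiff; exact absurd (hiff.mp h.2) (not_lt.mpr h.1.le)

lemma mem_of_flip (a b y : ℝ) (ha : y ≠ a) (hb : y ≠ b) (h : ¬ ((y < a) ↔ (y < b))) :
    min a b < y ∧ y < max a b := by
  by_cases h1 : y < a
  · have h2 : ¬ y < b := fun h2 => h ⟨fun _ => h2, fun _ => h1⟩
    have : b < y := lt_of_le_of_ne (not_lt.mp h2) (Ne.symm hb)
    exact ⟨lt_of_le_of_lt (min_le_right a b) this, lt_of_lt_of_le h1 (le_max_left a b)⟩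
  · have h2 : y < b := by
      by_contra h2; exact h ⟨fun h' => absurd h' h1, fun h' => absurd h' h2⟩
    have : a < y := lt_of_le_of_ne (not_lt.mp h1) (Ne.symm ha)
    exact ⟨lt_of_le_of_lt (min_le_left a b) this, lt_of_lt_of_le h2 (le_max_right a b)⟩

/-- splitting a sum over range (2m+1) into evens and odds -/
lemma sum_range_even_odd (f : ℕ → ℝ) (m : ℕ) :
    ∑ j ∈ Finset.range (2*m+1), f j
      = (∑ i ∈ Finset.range (m+1), f (2*i)) + ∑ i ∈ Finset.range m, f (2*i+1) := by
  induction m with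
  | zero => simp
  | succ m ih =>
    have h1 : 2*(m+1)+1 = (2*m+1) + 1 + 1 := by ring
    rw [h1, Finset.sum_range_succ, Finset.sum_range_succ, ih,
      Finset.sum_range_succ (fun i => f (2*i)) (m+1), Finset.sum_range_succ (fun i => f (2*i+1)) m]
    abel



lemma half_bound (m : ℕ) (H : ℝ → ℝ) (s B T0 T1 : ℝ) (hs : 1 ≤ s)
    (hspeed : ∀ t u : ℝ, |H t - H u| ≤ s * |t - u|)
    (ts lo hi : ℕ → ℝ) (pad : ℕ → Bool)
    (hlen : ∀ i, i < m → lo i < hi i)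
    (hbounds : ∀ i, i < m → 0 ≤ lo i ∧ hi i ≤ B)
    (hT : ∀ i, i < m → T0 ≤ ts i ∧ ts i + (hi i - lo i) ≤ T1)
    (hord : ∀ i j : ℕ, i < j → j < m → ts i + (hi i - lo i) ≤ ts j)
    (htrav : ∀ i, i < m → Traverses H (ts i) (lo i) (hi i))
    (hdisj2 : ∀ i j, i < m → j < m → i ≠ j → pad i = pad j → hi i ≤ lo j ∨ hi j ≤ lo i)
    (hT01 : T0 ≤ T1) (hB : 0 ≤ B) (h0 : H T0 = 0) (h1 : H T1 = B) :
    ∃ A : ℝ, 0 ≤ A ∧ (∑ i ∈ Finset.range m, (hi i - lo i)) ≤ B + A ∧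
      B - (∑ i ∈ Finset.range m, (hi i - lo i)) + 2*A
        ≤ s * (T1 - T0 - ∑ i ∈ Finset.range m, (hi i - lo i)) := by
  classical
  set Q : ℝ := ∑ i ∈ Finset.range m, (hi i - lo i) with hQ
  have hlen0 : ∀ i, i < m → 0 ≤ hi i - lo i := fun i hi' => sub_nonneg.mpr (hlen i hi').le
  have hQ0 : 0 ≤ Q := Finset.sum_nonneg (fun i hi' => hlen0 i (Finset.mem_range.mp hi'))
  -- time checkpoints
  set τ : ℕ → ℝ := fun j =>
    if j = 0 then T0 else if 2*m+1 ≤ j then T1 else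
    if j % 2 = 1 then ts ((j-1)/2) else ts (j/2 - 1) + (hi (j/2 - 1) - lo (j/2 - 1)) with hτ
  have hτ0 : τ 0 = T0 := by simp [hτ]
  have hτlast : τ (2*m+1) = T1 := by
    simp only [hτ]
    rcases Nat.eq_zero_or_pos m with hm | hm
    · subst hm; norm_num
    · rw [if_neg (by omega), if_pos (le_refl _)]
  have hτodd : ∀ i, i < m → τ (2*i+1) = ts i := by
    intro i him
    simp only [hτ]
    rw [if_neg (by omega), if_neg (by omega), if_pos (by omega)]
    congr 1; omega
  have hτeven : ∀ i, i < m → τ (2*i+2) = ts i + (hi i - lo i) := by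
    intro i him
    simp only [hτ]
    rw [if_neg (by omega), if_neg (by omega), if_neg (by omega)]
    have : (2*i+2)/2 - 1 = i := by omega
    rw [this]
  have hmono : ∀ j, j < 2*m+1 → τ j ≤ τ (j+1) := by
    intro j hj
    rcases Nat.eq_zero_or_pos j with rfl | hj0
    · rw [hτ0]
      rcases Nat.eq_zero_or_pos m with hm | hm
      · subst hm
        have : (1:ℕ) = 2*0+1 := rfl
        rw [this, hτlast]; exact hT01
      · have : (1:ℕ) = 2*0+1 := rfl
        rw [this, hτodd 0 hm]; exact (hT 0 hm).1
    · rcases Nat.even_or_odd j with ⟨i, hji⟩ | ⟨i, hji⟩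
      · -- j = 2i, j ≥ 1 so i ≥ 1; j = 2(i-1)+2
        have hi1 : 1 ≤ i := by omega
        have hj2 : j = 2*(i-1)+2 := by omega
        have him : i - 1 < m := by omega
        rw [hj2]
        have h2 : 2*(i-1)+2+1 = 2*(i-1+1)+1 := by ring
        rw [hτeven _ him, h2]
        rcases Nat.lt_or_ge (i-1+1) m with hlt | hge
        · rw [hτodd _ hlt]
          exact hord (i-1) (i-1+1) (by omega) hlt
        · have : i - 1 + 1 = m := by omega
          rw [this, hτlast]
          exact (hT (i-1) him).2
      · -- j = 2i+1
        have him : i < m := by omega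
        rw [hji]
        have h2 : 2*i+1+1 = 2*i+2 := by ring
        rw [hτodd _ him, h2, hτeven _ him]
        linarith [hlen0 i him]
  -- position checkpoints
  set c : ℕ → ℝ := fun j => H (τ j) with hc
  have hc0 : c 0 = 0 := by rw [hc]; simp only [hτ0]; exact h0
  have hclast : c (2*m+1) = B := by rw [hc]; simp only [hτlast]; exact h1
  have hends : ∀ i, i < m →
      (c (2*i+1) = lo i ∧ c (2*i+2) = hi i) ∨ (c (2*i+1) = hi i ∧ c (2*i+2) = lo i) := by
    intro i him
    have e1 := hτodd i him
    have e2 := hτeven i him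
    have hmem1 : ts i ∈ Set.Icc (ts i) (ts i + (hi i - lo i)) :=
      ⟨le_refl _, by linarith [hlen0 i him]⟩
    have hmem2 : ts i + (hi i - lo i) ∈ Set.Icc (ts i) (ts i + (hi i - lo i)) :=
      ⟨by linarith [hlen0 i him], le_refl _⟩
    rcases htrav i him with hup | hdown
    · left
      constructor
      · rw [hc]; simp only [e1]; rw [hup _ hmem1]; ring
      · rw [hc]; simp only [e2]; rw [hup _ hmem2]; ring
    · right
      constructor
      · rw [hc]; simp only [e1]; rw [hdown _ hmem1]; ring
      · rw [hc]; simp only [e2]; rw [hdown _ hmem2]; ring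
  have hminmax : ∀ i, i < m →
      min (c (2*i+1)) (c (2*i+2)) = lo i ∧ max (c (2*i+1)) (c (2*i+2)) = hi i := by
    intro i him
    rcases hends i him with ⟨e1, e2⟩ | ⟨e1, e2⟩ <;> rw [e1, e2]
    · exact ⟨min_eq_left (hlen i him).le, max_eq_right (hlen i him).le⟩
    · exact ⟨min_eq_right (hlen i him).le, max_eq_left (hlen i him).le⟩
  -- gap durations
  have hgapsum : ∑ i ∈ Finset.range (m+1), (τ (2*i+1) - τ (2*i)) = (T1 - T0) - Q := by
    have htel : ∑ j ∈ Finset.range (2*m+1), (τ (j+1) - τ j) = T1 - T0 := by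
      rw [Finset.sum_range_sub τ (2*m+1), hτlast, hτ0]
    rw [sum_range_even_odd (fun j => τ (j+1) - τ j) m] at htel
    have hodds : ∑ i ∈ Finset.range m, (τ (2*i+1+1) - τ (2*i+1)) = Q := by
      rw [hQ]
      apply Finset.sum_congr rfl
      intro i hi'
      have him := Finset.mem_range.mp hi'
      have h2 : 2*i+1+1 = 2*i+2 := by ring
      rw [h2, hτeven i him, hτodd i him]; ring
    have : ∀ i ∈ Finset.range (m+1), (fun j => τ (j+1) - τ j) (2*i) = τ (2*i+1) - τ (2*i) := by
      intro i _; rfl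
    rw [Finset.sum_congr rfl this] at htel
    linarith [htel, hodds]
  have hgap0 : ∀ i, i < m+1 → 0 ≤ τ (2*i+1) - τ (2*i) := by
    intro i hi'
    have := hmono (2*i) (by omega)
    linarith [this]
  have hTQ : 0 ≤ T1 - T0 - Q := by
    rw [← hgapsum]
    exact Finset.sum_nonneg (fun i hi' => hgap0 i (Finset.mem_range.mp hi'))
  have hs0 : (0:ℝ) < s := lt_of_lt_of_le one_pos hs
  -- the stockpile sets on each pad
  set U : Bool → Set ℝ := fun b =>
    ⋃ i ∈ (Finset.range m).filter (fun i => pad i = b), Set.Ioo (lo i) (hi i) with hU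
  have measU : ∀ b, MeasurableSet (U b) := by
    intro b
    exact Finset.measurableSet_biUnion _ (fun i _ => measurableSet_Ioo)
  have volU : ∀ b, volume (U b)
      = ∑ i ∈ (Finset.range m).filter (fun i => pad i = b), ENNReal.ofReal (hi i - lo i) := by
    intro b
    rw [hU]
    rw [measure_biUnion_finset ?_ (fun i _ => measurableSet_Ioo)]
    · exact Finset.sum_congr rfl (fun i _ => Real.volume_Ioo)
    · intro i hi' j hj' hij
      simp only [Finset.coe_filter, Set.mem_setOf_eq, Finset.mem_range] at hi' hj'
      have hd := hdisj2 i j hi'.1 hj'.1 hij (hi'.2.trans hj'.2.symm)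
      have hgoal : Disjoint (Set.Ioo (lo i) (hi i)) (Set.Ioo (lo j) (hi j)) := by
        rw [Set.disjoint_left]
        intro y hy1 hy2
        rcases hd with hd | hd
        · exact absurd (lt_of_lt_of_le hy1.2 hd) (not_lt.mpr hy2.1.le)
        · exact absurd (lt_of_lt_of_le hy2.2 hd) (not_lt.mpr hy1.1.le)
      exact hgoal
  have hUsub : ∀ b, U b ⊆ Set.Ioo 0 B := by
    intro b
    rw [hU]
    intro y hy
    simp only [Set.mem_iUnion] at hy
    obtain ⟨i, hi', hy⟩ := hy
    simp only [Finset.mem_coe, Finset.mem_filter, Finset.mem_range] at hi'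
    exact ⟨lt_of_le_of_lt (hbounds i hi'.1).1 hy.1, lt_of_lt_of_le hy.2 (hbounds i hi'.1).2⟩
  have hUnionsub : U true ∪ U false ⊆ Set.Ioo 0 B := Set.union_subset (hUsub true) (hUsub false)
  -- key measure identities
  have E2 : volume (U true ∪ U false) + volume (U true ∩ U false) = ENNReal.ofReal Q := by
    rw [measure_union_add_inter (U true) (measU false), volU true, volU false]
    have hfe : (Finset.range m).filter (fun i => pad i = false)
        = (Finset.range m).filter (fun i => ¬ pad i = true) := by
      apply Finset.filter_congr; intro i _; simp
    rw [hfe, Finset.sum_filter_add_sum_filter_not (Finset.range m) (fun i => pad i = true)]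
    rw [hQ, ENNReal.ofReal_sum_of_nonneg (fun i hi' => hlen0 i (Finset.mem_range.mp hi'))]
  have measUU : MeasurableSet (U true ∪ U false) := (measU true).union (measU false)
  have measI : MeasurableSet (U true ∩ U false) := (measU true).inter (measU false)
  set G : Set ℝ := (Set.Ioo (0:ℝ) B \ (U true ∪ U false)) ∪ (U true ∩ U false) with hG
  have E1 : volume G + volume (U true ∪ U false)
      = ENNReal.ofReal B + volume (U true ∩ U false) := by
    have hdisjG : Disjoint (Set.Ioo (0:ℝ) B \ (U true ∪ U false)) (U true ∩ U false) :=
      Set.disjoint_left.mpr (fun y hy hy2 => hy.2 (Set.mem_union_left _ hy2.1))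
    have h1' : volume G
        = volume (Set.Ioo (0:ℝ) B \ (U true ∪ U false)) + volume (U true ∩ U false) :=
      measure_union hdisjG measI
    have hdisjD : Disjoint (Set.Ioo (0:ℝ) B \ (U true ∪ U false)) (U true ∪ U false) :=
      Set.disjoint_left.mpr (fun y hy hy2 => hy.2 hy2)
    have h2' : volume (Set.Ioo (0:ℝ) B \ (U true ∪ U false)) + volume (U true ∪ U false)
        = ENNReal.ofReal B := by
      rw [← measure_union hdisjD measUU, Set.diff_union_of_subset hUnionsub,
        Real.volume_Ioo, sub_zero]
    rw [h1', add_right_comm, h2']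
  -- gap intervals
  set gapIoo : ℕ → Set ℝ := fun i =>
    Set.Ioo (min (c (2*i)) (c (2*i+1))) (max (c (2*i)) (c (2*i+1))) with hgapIoo
  have hcov : G \ ↑((Finset.range (2*m+2)).image c) ⊆ ⋃ i ∈ Finset.range (m+1), gapIoo i := by
    intro y hy
    obtain ⟨hyG, hyE⟩ := hy
    have hne : ∀ j, j < 2*m+2 → y ≠ c j := by
      intro j hj heq
      apply hyE
      simp only [Finset.coe_image, Set.mem_image, Finset.mem_coe, Finset.mem_range]
      exact ⟨j, hj, heq.symm⟩
    have hy0B : y ∈ Set.Ioo (0:ℝ) B := by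
      rcases hyG with h | h
      · exact h.1
      · exact hUsub true h.1
    set g : ℕ → Bool := fun j => decide (y < c j) with hg
    have hg0 : g 0 = false := by
      simp only [hg, hc0, decide_eq_false_iff_not]
      exact not_lt.mpr hy0B.1.le
    have hgN : g (2*m+1) = true := by
      simp only [hg, hclast, decide_eq_true_eq]
      exact hy0B.2
    have hodd := parity_flips g (2*m+1) hg0 hgN
    by_contra hnot
    have hnot' : ∀ i, i < m+1 →
        ¬ (min (c (2*i)) (c (2*i+1)) < y ∧ y < max (c (2*i)) (c (2*i+1))) := by
      intro i hi' hcontra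
      exact hnot (Set.mem_biUnion (Finset.mem_range.mpr hi') hcontra)
    have hF : (Finset.range (2*m+1)).filter (fun j => g j ≠ g (j+1))
        = ((Finset.range m).filter (fun i => lo i < y ∧ y < hi i)).image (fun i => 2*i+1) := by
      apply Finset.ext
      intro j
      simp only [Finset.mem_filter, Finset.mem_range, Finset.mem_image]
      constructor
      · rintro ⟨hjlt, hflip⟩
        have hflip' : ¬ ((y < c j) ↔ (y < c (j+1))) := by
          intro hiff
          exact hflip (decide_eq_decide.mpr hiff)
        have hmem := mem_of_flip (c j) (c (j+1)) y (hne j (by omega)) (hne (j+1) (by omega)) hflip'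
        rcases Nat.even_or_odd j with ⟨i, hji⟩ | ⟨i, hji⟩
        · exfalso
          have hj2 : j = 2*i := by omega
          subst hj2
          exact hnot' i (by omega) hmem
        · have him : i < m := by omega
          refine ⟨i, ⟨him, ?_⟩, by omega⟩
          have e := hminmax i him
          have hj2 : j = 2*i+1 := by omega
          subst hj2
          have h22 : 2*i+1+1 = 2*i+2 := by omega
          rw [h22] at hmem
          rw [e.1, e.2] at hmem
          exact hmem
      · rintro ⟨i, ⟨him, hyIoo⟩, rfl⟩
        refine ⟨by omega, ?_⟩
        intro heq
        have hiff : (y < c (2*i+1)) ↔ (y < c (2*i+1+1)) := decide_eq_decide.mp heq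
        apply flip_of_mem (c (2*i+1)) (c (2*i+1+1)) y ?_ hiff
        have e := hminmax i him
        have h22 : 2*i+1+1 = 2*i+2 := by omega
        rw [h22, e.1, e.2]
        exact hyIoo
    rcases hyG with hdiffmem | hintermem
    · have hempty : (Finset.range m).filter (fun i => lo i < y ∧ y < hi i) = ∅ := by
        rw [Finset.filter_eq_empty_iff]
        intro i hi' hyI
        have him := Finset.mem_range.mp hi'
        apply hdiffmem.2
        have hmemU : y ∈ U (pad i) := by
          have hm2 : y ∈ ⋃ j ∈ (Finset.range m).filter (fun j => pad j = pad i),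
              Set.Ioo (lo j) (hi j) :=
            Set.mem_iUnion₂.mpr ⟨i, by simp [him], hyI⟩
          simpa only [hU] using hm2
        cases hbp : pad i
        · rw [hbp] at hmemU
          exact Set.mem_union_right _ hmemU
        · rw [hbp] at hmemU
          exact Set.mem_union_left _ hmemU
      rw [hF, hempty] at hodd
      simp at hodd
    · obtain ⟨hyt, hyf⟩ := hintermem
      rw [hU] at hyt hyf
      simp only [Set.mem_iUnion, Finset.mem_coe, Finset.mem_filter, Finset.mem_range,
        exists_prop] at hyt hyf
      obtain ⟨i₁, ⟨hi₁m, hpad₁⟩, hy₁⟩ := hyt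
      obtain ⟨i₂, ⟨hi₂m, hpad₂⟩, hy₂⟩ := hyf
      have hi12 : i₁ ≠ i₂ := by
        intro h
        rw [h, hpad₂] at hpad₁
        exact Bool.false_ne_true hpad₁
      have hfilter : (Finset.range m).filter (fun i => lo i < y ∧ y < hi i) = {i₁, i₂} := by
        apply Finset.ext
        intro i
        simp only [Finset.mem_filter, Finset.mem_range, Finset.mem_insert, Finset.mem_singleton]
        constructor
        · rintro ⟨him, hyI⟩
          by_contra hcon
          push_neg at hcon
          obtain ⟨hne1, hne2⟩ := hcon
          cases hbp : pad i
          · rcases hdisj2 i i₂ him hi₂m hne2 (by rw [hbp, hpad₂]) with hd | hd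
            · exact absurd (lt_of_lt_of_le hyI.2 hd) (not_lt.mpr hy₂.1.le)
            · exact absurd (lt_of_lt_of_le hy₂.2 hd) (not_lt.mpr hyI.1.le)
          · rcases hdisj2 i i₁ him hi₁m hne1 (by rw [hbp, hpad₁]) with hd | hd
            · exact absurd (lt_of_lt_of_le hyI.2 hd) (not_lt.mpr hy₁.1.le)
            · exact absurd (lt_of_lt_of_le hy₁.2 hd) (not_lt.mpr hyI.1.le)
        · rintro (rfl | rfl)
          · exact ⟨hi₁m, hy₁⟩
          · exact ⟨hi₂m, hy₂⟩
      rw [hF, hfilter] at hodd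
      rw [Finset.card_image_of_injective _ (fun a b hab => by omega)] at hodd
      rw [Finset.card_insert_of_notMem (by simp [hi12]), Finset.card_singleton] at hodd
      norm_num [Nat.odd_iff] at hodd
  -- measure chain
  have volG_le : volume G ≤ ENNReal.ofReal (s * (T1 - T0 - Q)) := by
    have hnull : volume (↑((Finset.range (2*m+2)).image c) : Set ℝ) = 0 :=
      Set.Finite.measure_zero (Finset.finite_toSet _) volume
    have h0' : volume G = volume (G \ ↑((Finset.range (2*m+2)).image c)) :=
      (measure_diff_null hnull).symm
    rw [h0']
    refine le_trans (measure_mono hcov) ?_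
    refine le_trans (measure_biUnion_finset_le _ _) ?_
    have hstep : ∀ i ∈ Finset.range (m+1),
        volume (gapIoo i) ≤ ENNReal.ofReal (s * (τ (2*i+1) - τ (2*i))) := by
      intro i hi'
      have him := Finset.mem_range.mp hi'
      rw [hgapIoo]
      simp only []
      rw [Real.volume_Ioo]
      apply ENNReal.ofReal_le_ofReal
      have habs : max (c (2*i)) (c (2*i+1)) - min (c (2*i)) (c (2*i+1))
          = |c (2*i+1) - c (2*i)| := max_sub_min_eq_abs _ _
      rw [habs]
      calc |c (2*i+1) - c (2*i)| = |H (τ (2*i+1)) - H (τ (2*i))| := rfl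
        _ ≤ s * |τ (2*i+1) - τ (2*i)| := hspeed _ _
        _ = s * (τ (2*i+1) - τ (2*i)) := by rw [abs_of_nonneg (hgap0 i him)]
    refine le_trans (Finset.sum_le_sum hstep) ?_
    rw [← ENNReal.ofReal_sum_of_nonneg
      (fun i hi' => mul_nonneg hs0.le (hgap0 i (Finset.mem_range.mp hi')))]
    apply ENNReal.ofReal_le_ofReal
    rw [← Finset.mul_sum, hgapsum]
  -- finiteness
  have hVu_le : volume (U true ∪ U false) ≤ ENNReal.ofReal B := by
    refine le_trans (measure_mono hUnionsub) ?_
    rw [Real.volume_Ioo, sub_zero]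
  have hVufin : volume (U true ∪ U false) ≠ ⊤ :=
    ne_top_of_le_ne_top ENNReal.ofReal_ne_top hVu_le
  have hWle : volume (U true ∩ U false) ≤ ENNReal.ofReal Q := by
    rw [← E2]; exact le_add_self
  have hWfin : volume (U true ∩ U false) ≠ ⊤ :=
    ne_top_of_le_ne_top ENNReal.ofReal_ne_top hWle
  have hGfin : volume G ≠ ⊤ := ne_top_of_le_ne_top ENNReal.ofReal_ne_top volG_le
  -- pass to reals
  set A : ℝ := (volume (U true ∩ U false)).toReal with hA
  set v : ℝ := (volume (U true ∪ U false)).toReal with hv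
  set gr : ℝ := (volume G).toReal with hgr
  have hrE2 : v + A = Q := by
    rw [hv, hA, ← ENNReal.toReal_add hVufin hWfin, E2, ENNReal.toReal_ofReal hQ0]
  have hrE1 : gr + v = B + A := by
    rw [hgr, hv, ← ENNReal.toReal_add hGfin hVufin, E1,
      ENNReal.toReal_add ENNReal.ofReal_ne_top hWfin, ENNReal.toReal_ofReal hB, hA]
  have hrle : gr ≤ s * (T1 - T0 - Q) := by
    have := ENNReal.toReal_mono ENNReal.ofReal_ne_top volG_le
    rwa [ENNReal.toReal_ofReal (mul_nonneg hs0.le hTQ)] at this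
  have hvB : v ≤ B := by
    have := ENNReal.toReal_mono ENNReal.ofReal_ne_top hVu_le
    rwa [ENNReal.toReal_ofReal hB] at this
  exact ⟨A, ENNReal.toReal_nonneg, by linarith, by linarith⟩

lemma Traverses.rev (H : ℝ → ℝ) (t0 a b R : ℝ) (h : Traverses H t0 a b) (hab : a ≤ b) :
    Traverses (fun u => H (R - u)) (R - (t0 + (b - a))) a b := by
  rcases h with hup | hdown
  · right
    intro u hu
    have hv : R - u ∈ Set.Icc t0 (t0 + (b - a)) := by
      constructor
      · have := hu.2; linarith
      · have := hu.1; linarith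
    show H (R - u) = b - (u - (R - (t0 + (b - a))))
    rw [hup _ hv]; ring
  · left
    intro u hu
    have hv : R - u ∈ Set.Icc t0 (t0 + (b - a)) := by
      constructor
      · have := hu.2; linarith
      · have := hu.1; linarith
    show H (R - u) = a + (u - (R - (t0 + (b - a))))
    rw [hdown _ hv]; ring


/-- Lower bound for a single reclaimer with positioning decisions and a fixed
reclaim order: for any placement of the stockpiles on the two pads and any feasible
schedule, the makespan `C` is at least `P + min_{0 ≤ k ≤ n} |P^k − P̄^k| / s`. -/
theorem stmt8 (n : ℕ) (p : Fin n → ℝ) (hp : ∀ i, 0 < p i)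
    (L s : ℝ) (hs : 1 ≤ s) (hL : 0 < L)
    (hsum : ∑ i, p i ≤ 3 * L / 2)
    -- placement: pad choice and left endpoint for each stockpile
    (pads : Fin n → Bool) (l : Fin n → ℝ)
    (hplace : ∀ i, 0 ≤ l i ∧ l i + p i ≤ L)
    (hdisj : ∀ i j, i ≠ j → pads i = pads j → l i + p i ≤ l j ∨ l j + p j ≤ l i)
    -- schedule: reclaimer trajectory with makespan C, traversing the stockpiles in order
    (C : ℝ) (hC : 0 ≤ C) (H : ℝ → ℝ)
    (hH0 : H 0 = 0) (hHC : H C = 0)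
    (hspeed : ∀ t u : ℝ, |H t - H u| ≤ s * |t - u|)
    (t : Fin n → ℝ)
    (htmem : ∀ i, 0 ≤ t i ∧ t i + p i ≤ C)
    (horder : ∀ i j : Fin n, i < j → t i + p i ≤ t j)
    (htrav : ∀ i, Traverses H (t i) (l i) (l i + p i)) :
    (∑ i, p i) +
      ((Finset.range (n + 1)).inf' Finset.nonempty_range_add_one fun k =>
        |(∑ i ∈ Finset.univ.filter (fun i : Fin n => (i : ℕ) < k), p i) -
          ((∑ i, p i) - ∑ i ∈ Finset.univ.filter (fun i : Fin n => (i : ℕ) < k), p i)|) / s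
      ≤ C := by
    classical
  have hs0 : (0:ℝ) < s := lt_of_lt_of_le one_pos hs
  have Hlip : LipschitzWith (Real.toNNReal s) H := by
    apply LipschitzWith.of_dist_le_mul
    intro x y
    rw [Real.dist_eq, Real.dist_eq, Real.coe_toNNReal s hs0.le]
    exact hspeed x y
  have Hcont : Continuous H := Hlip.continuous
  obtain ⟨t₁, ht₁mem, hmax'⟩ :=
    isCompact_Icc.exists_isMaxOn (s := Set.Icc (0:ℝ) C) ⟨0, le_refl 0, hC⟩ Hcont.continuousOn
  set x₁ : ℝ := H t₁ with hx₁
  have hmax : ∀ u ∈ Set.Icc (0:ℝ) C, H u ≤ x₁ := fun u hu => hmax' hu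
  have hx₁0 : 0 ≤ x₁ := by
    have := hmax 0 ⟨le_refl 0, hC⟩
    rwa [hH0] at this
  have htmemC : ∀ i : Fin n, t i ∈ Set.Icc (0:ℝ) C ∧ t i + p i ∈ Set.Icc (0:ℝ) C := by
    intro i
    obtain ⟨h1, h2⟩ := htmem i
    exact ⟨⟨h1, by linarith [(hp i).le]⟩, ⟨by linarith [(hp i).le], h2⟩⟩
  have htop : ∀ i : Fin n, l i + p i ≤ x₁ := by
    intro i
    rcases htrav i with hup | hdown
    · have heq : H (t i + p i) = l i + p i := by
        have hmem : t i + p i ∈ Set.Icc (t i) (t i + (l i + p i - l i)) :=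
          ⟨by linarith [(hp i).le], by linarith⟩
        rw [hup _ hmem]; ring
      rw [← heq]; exact hmax _ (htmemC i).2
    · have heq : H (t i) = l i + p i := by
        have hmem : t i ∈ Set.Icc (t i) (t i + (l i + p i - l i)) :=
          ⟨le_refl _, by linarith [(hp i).le]⟩
        rw [hdown _ hmem]; ring
      rw [← heq]; exact hmax _ (htmemC i).1
  set k : ℕ := (Finset.univ.filter (fun i : Fin n => t i + p i ≤ t₁)).card with hk
  have hkn : k ≤ n := le_trans (Finset.card_filter_le _ _) (by simp)
  have hchar : ∀ i : Fin n, ((i : ℕ) < k ↔ t i + p i ≤ t₁) := by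
    intro i
    constructor
    · intro hik
      by_contra hcon
      have hsub : (Finset.univ.filter (fun j : Fin n => t j + p j ≤ t₁)) ⊆ Finset.Iio i := by
        intro j hj
        simp only [Finset.mem_filter, Finset.mem_univ, true_and] at hj
        rw [Finset.mem_Iio]
        by_contra hji
        push_neg at hji
        apply hcon
        rcases eq_or_lt_of_le hji with heq | hlt
        · rw [heq]; exact hj
        · have h2 := horder i j hlt
          linarith [hj, (hp j).le]
      have hcard := Finset.card_le_card hsub
      rw [Fin.card_Iio] at hcard
      omega
    · intro hit
      have hsub : Finset.Iic i ⊆ Finset.univ.filter (fun j : Fin n => t j + p j ≤ t₁) := by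
        intro j hj
        rw [Finset.mem_Iic] at hj
        simp only [Finset.mem_filter, Finset.mem_univ, true_and]
        rcases eq_or_lt_of_le hj with heq | hlt
        · rw [Fin.le_def] at hj
          have : j = i := le_antisymm ‹j ≤ i› (le_of_eq heq.symm)
          rw [this]; exact hit
        · have h2 := horder j i hlt
          linarith [(hp i).le]
      have hcard := Finset.card_le_card hsub
      rw [Fin.card_Iic] at hcard
      omega
  have hgapT : ∀ i : Fin n, k ≤ (i : ℕ) → t₁ ≤ t i := by
    intro i hki
    have hkn' : k < n := lt_of_le_of_lt hki i.isLt
    set i₀ : Fin n := ⟨k, hkn'⟩ with hi₀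
    have hnotfin : ¬ (t i₀ + p i₀ ≤ t₁) := by
      rw [← hchar i₀]; simp [hi₀]
    push_neg at hnotfin
    have h10 : t₁ ≤ t i₀ := by
      by_contra hcon
      push_neg at hcon
      rcases htrav i₀ with hup | hdown
      · have hmem : t₁ ∈ Set.Icc (t i₀) (t i₀ + (l i₀ + p i₀ - l i₀)) :=
          ⟨hcon.le, by linarith⟩
        have he := hup t₁ hmem
        have h2 : x₁ < l i₀ + p i₀ := by rw [hx₁, he]; linarith
        linarith [htop i₀]
      · have hmem : t₁ ∈ Set.Icc (t i₀) (t i₀ + (l i₀ + p i₀ - l i₀)) :=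
          ⟨hcon.le, by linarith⟩
        have he := hdown t₁ hmem
        have h2 : x₁ < l i₀ + p i₀ := by rw [hx₁, he]; linarith
        linarith [htop i₀]
    rcases eq_or_lt_of_le hki with heq | hlt
    · have hieq : i = i₀ := by
        apply Fin.ext
        show (i : ℕ) = k
        omega
      rw [hieq]; exact h10
    · have hlt' : i₀ < i := by rw [Fin.lt_def]; simpa [hi₀] using hlt
      have h2 := horder i₀ i hlt'
      linarith [(hp i₀).le]
  -- ℕ-indexed families
  set p' : ℕ → ℝ := fun j => if h : j < n then p ⟨j, h⟩ else 0 with hp'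
  set l' : ℕ → ℝ := fun j => if h : j < n then l ⟨j, h⟩ else 0 with hl'
  set hi' : ℕ → ℝ := fun j => if h : j < n then l ⟨j, h⟩ + p ⟨j, h⟩ else 0 with hhi'
  set t' : ℕ → ℝ := fun j => if h : j < n then t ⟨j, h⟩ else 0 with ht'
  set pads' : ℕ → Bool := fun j => if h : j < n then pads ⟨j, h⟩ else true with hpads'
  -- first half
  obtain ⟨A₁, hA₁0, hA₁1, hA₁2⟩ :=
    half_bound k H s x₁ 0 t₁ hs hspeed t' l' hi' pads'
      (fun i him => by
        have hin : i < n := lt_of_lt_of_le him hkn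
        simp only [hl', hhi', dif_pos hin]
        linarith [hp ⟨i, hin⟩])
      (fun i him => by
        have hin : i < n := lt_of_lt_of_le him hkn
        simp only [hl', hhi', dif_pos hin]
        exact ⟨(hplace ⟨i, hin⟩).1, htop ⟨i, hin⟩⟩)
      (fun i him => by
        have hin : i < n := lt_of_lt_of_le him hkn
        simp only [ht', hl', hhi', dif_pos hin]
        refine ⟨(htmem ⟨i, hin⟩).1, ?_⟩
        have hfin := (hchar ⟨i, hin⟩).mp him
        linarith)
      (fun i j hij hjm => by
        have hjn : j < n := lt_of_lt_of_le hjm hkn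
        have hin : i < n := lt_trans hij hjn
        simp only [ht', hl', hhi', dif_pos hin, dif_pos hjn]
        have := horder ⟨i, hin⟩ ⟨j, hjn⟩ (by rw [Fin.lt_def]; exact hij)
        linarith)
      (fun i him => by
        have hin : i < n := lt_of_lt_of_le him hkn
        simp only [ht', hl', hhi', dif_pos hin]
        exact htrav ⟨i, hin⟩)
      (fun i j him hjm hij hpadeq => by
        have hin : i < n := lt_of_lt_of_le him hkn
        have hjn : j < n := lt_of_lt_of_le hjm hkn
        simp only [hl', hhi', dif_pos hin, dif_pos hjn]
        apply hdisj ⟨i, hin⟩ ⟨j, hjn⟩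
        · intro hcontra
          exact hij (congrArg Fin.val hcontra)
        · simpa only [hpads', dif_pos hin, dif_pos hjn] using hpadeq)
      ht₁mem.1 hx₁0 hH0 hx₁.symm
  -- second half (time-reversed)
  set H₂ : ℝ → ℝ := fun u => H (C + t₁ - u) with hH₂
  set ts₂ : ℕ → ℝ := fun j => C + t₁ - (t' (n-1-j) + p' (n-1-j)) with hts₂
  set lo₂ : ℕ → ℝ := fun j => l' (n-1-j) with hlo₂
  set hi₂ : ℕ → ℝ := fun j => hi' (n-1-j) with hhi₂
  set pad₂ : ℕ → Bool := fun j => pads' (n-1-j) with hpad₂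
  have hidx : ∀ j, j < n - k → (n-1-j < n ∧ k ≤ n-1-j) := by
    intro j hj
    omega
  obtain ⟨A₂, hA₂0, hA₂1, hA₂2⟩ :=
    half_bound (n-k) H₂ s x₁ t₁ C hs
      (fun a b => by
        simp only [hH₂]
        have h1 := hspeed (C + t₁ - a) (C + t₁ - b)
        have habs : |C + t₁ - a - (C + t₁ - b)| = |a - b| := by
          rw [show C + t₁ - a - (C + t₁ - b) = -(a - b) by ring, abs_neg]
        rwa [habs] at h1)
      ts₂ lo₂ hi₂ pad₂
      (fun j hjm => by
        obtain ⟨hin, _⟩ := hidx j hjm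
        simp only [hlo₂, hhi₂, hl', hhi', dif_pos hin]
        linarith [hp ⟨n-1-j, hin⟩])
      (fun j hjm => by
        obtain ⟨hin, _⟩ := hidx j hjm
        simp only [hlo₂, hhi₂, hl', hhi', dif_pos hin]
        exact ⟨(hplace ⟨n-1-j, hin⟩).1, htop ⟨n-1-j, hin⟩⟩)
      (fun j hjm => by
        obtain ⟨hin, hki⟩ := hidx j hjm
        simp only [hts₂, hlo₂, hhi₂, ht', hl', hhi', hp', dif_pos hin]
        constructor
        · linarith [(htmem ⟨n-1-j, hin⟩).2]
        · have := hgapT ⟨n-1-j, hin⟩ hki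
          linarith)
      (fun i j hij hjm => by
        obtain ⟨hjn, hjk⟩ := hidx j hjm
        obtain ⟨hin, hik⟩ := hidx i (lt_trans hij hjm)
        simp only [hts₂, hlo₂, hhi₂, ht', hl', hhi', hp', dif_pos hin, dif_pos hjn]
        have hlt : (⟨n-1-j, hjn⟩ : Fin n) < (⟨n-1-i, hin⟩ : Fin n) := by
          rw [Fin.lt_def]
          simp only [Fin.val_mk]
          omega
        have := horder ⟨n-1-j, hjn⟩ ⟨n-1-i, hin⟩ hlt
        linarith)
      (fun j hjm => by
        obtain ⟨hin, _⟩ := hidx j hjm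
        have hrev := Traverses.rev H (t ⟨n-1-j, hin⟩) (l ⟨n-1-j, hin⟩)
          (l ⟨n-1-j, hin⟩ + p ⟨n-1-j, hin⟩) (C + t₁) (htrav ⟨n-1-j, hin⟩)
          (by linarith [hp ⟨n-1-j, hin⟩])
        have harg : ts₂ j = (C + t₁) - (t ⟨n-1-j, hin⟩
            + (l ⟨n-1-j, hin⟩ + p ⟨n-1-j, hin⟩ - l ⟨n-1-j, hin⟩)) := by
          simp only [hts₂, ht', hp', dif_pos hin]
          ring
        have hlo : lo₂ j = l ⟨n-1-j, hin⟩ := by simp only [hlo₂, hl', dif_pos hin]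
        have hhi2 : hi₂ j = l ⟨n-1-j, hin⟩ + p ⟨n-1-j, hin⟩ := by
          simp only [hhi₂, hhi', dif_pos hin]
        rw [harg, hlo, hhi2]
        exact hrev)
      (fun i j him hjm hij hpadeq => by
        obtain ⟨hin, _⟩ := hidx i him
        obtain ⟨hjn, _⟩ := hidx j hjm
        simp only [hlo₂, hhi₂, hl', hhi', dif_pos hin, dif_pos hjn]
        apply hdisj ⟨n-1-i, hin⟩ ⟨n-1-j, hjn⟩
        · intro hcontra
          have := congrArg Fin.val hcontra
          simp only [Fin.val_mk] at this
          omega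
        · simpa only [hpad₂, hpads', dif_pos hin, dif_pos hjn] using hpadeq)
      ht₁mem.2 hx₁0
      (by simp only [hH₂]; rw [show C + t₁ - t₁ = C by ring]; exact hHC)
      (by simp only [hH₂]; rw [show C + t₁ - C = t₁ by ring])
  -- sums bookkeeping
  have hpcoe : ∀ i : Fin n, p' (i : ℕ) = p i := by
    intro i
    simp only [hp', dif_pos i.isLt, Fin.eta]
  have hEa : ∑ j ∈ Finset.range k, p' j
      = ∑ i ∈ Finset.univ.filter (fun i : Fin n => (i : ℕ) < k), p i := by
    rw [Finset.sum_filter]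
    have h3 : (Finset.range n).filter (fun j => j < k) = Finset.range k := by
      ext j
      simp only [Finset.mem_filter, Finset.mem_range]
      omega
    calc ∑ j ∈ Finset.range k, p' j
        = ∑ j ∈ (Finset.range n).filter (fun j => j < k), p' j := by rw [h3]
      _ = ∑ j ∈ Finset.range n, (if j < k then p' j else 0) := Finset.sum_filter _ _
      _ = ∑ i : Fin n, (if ((i : ℕ)) < k then p' (i : ℕ) else 0) :=
          (Fin.sum_univ_eq_sum_range (fun j => if j < k then p' j else 0) n).symm
      _ = ∑ i : Fin n, (if ((i : ℕ)) < k then p i else 0) := by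
          apply Finset.sum_congr rfl
          intro i _
          by_cases hik : (i : ℕ) < k
          · rw [if_pos hik, if_pos hik, hpcoe]
          · rw [if_neg hik, if_neg hik]
  have hEtot : ∑ j ∈ Finset.range n, p' j = ∑ i, p i := by
    rw [← Fin.sum_univ_eq_sum_range p' n]
    exact Finset.sum_congr rfl (fun i _ => hpcoe i)
  have hEb : ∑ j ∈ Finset.range (n-k), p' (n-1-j) = (∑ i, p i) - ∑ j ∈ Finset.range k, p' j := by
    have h1 : ∑ j ∈ Finset.range (n-k), p' (n-1-j)
        = ∑ j ∈ Finset.range (n-k), (fun j => p' (j + k)) ((n-k) - 1 - j) := by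
      apply Finset.sum_congr rfl
      intro j hj
      have hjm := Finset.mem_range.mp hj
      congr 1
      omega
    rw [h1, Finset.sum_range_reflect (fun j => p' (j + k)) (n-k)]
    have h2 : ∑ j ∈ Finset.range n, p' j
        = ∑ j ∈ Finset.range k, p' j + ∑ j ∈ Finset.range (n-k), p' (k + j) := by
      rw [← Finset.sum_range_add p' k (n-k), show k + (n-k) = n by omega]
    rw [hEtot] at h2
    have h3 : ∑ j ∈ Finset.range (n-k), p' (j + k) = ∑ j ∈ Finset.range (n-k), p' (k + j) :=
      Finset.sum_congr rfl (fun j _ => by rw [Nat.add_comm])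
    rw [h3]
    linarith
  -- rewrite the half_bound sums
  have hsum1 : ∑ i ∈ Finset.range k, (hi' i - l' i) = ∑ j ∈ Finset.range k, p' j := by
    apply Finset.sum_congr rfl
    intro j hj
    have hjn : j < n := lt_of_lt_of_le (Finset.mem_range.mp hj) hkn
    simp only [hhi', hl', hp', dif_pos hjn]
    ring
  have hsum2 : ∑ j ∈ Finset.range (n-k), (hi₂ j - lo₂ j)
      = ∑ j ∈ Finset.range (n-k), p' (n-1-j) := by
    apply Finset.sum_congr rfl
    intro j hj
    have hjn : n-1-j < n := (hidx j (Finset.mem_range.mp hj)).1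
    simp only [hhi₂, hlo₂, hhi', hl', hp', dif_pos hjn]
    ring
  set P : ℝ := ∑ i, p i with hP
  set S1 : ℝ := ∑ i ∈ Finset.univ.filter (fun i : Fin n => (i : ℕ) < k), p i with hS1
  rw [hsum1, hEa] at hA₁1 hA₁2
  rw [hsum2, hEb, hEa] at hA₂1 hA₂2
  -- final arithmetic
  have hdistr : s * (t₁ - 0 - S1) + s * (C - t₁ - (P - S1)) = s * (C - P) := by ring
  have habs : |S1 - (P - S1)| ≤ s * (C - P) := by
    rw [abs_sub_le_iff]
    constructor
    · linarith
    · linarith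
  have hkmem : k ∈ Finset.range (n + 1) := Finset.mem_range.mpr (by omega)
  have hinf : ((Finset.range (n + 1)).inf' Finset.nonempty_range_add_one fun k =>
        |(∑ i ∈ Finset.univ.filter (fun i : Fin n => (i : ℕ) < k), p i) -
          ((∑ i, p i) - ∑ i ∈ Finset.univ.filter (fun i : Fin n => (i : ℕ) < k), p i)|)
      ≤ |S1 - (P - S1)| := Finset.inf'_le _ hkmem
  have h5 : |S1 - (P - S1)| / s ≤ C - P := by
    rw [div_le_iff₀ hs0, mul_comm]
    exact habs
  calc P + ((Finset.range (n + 1)).inf' Finset.nonempty_range_add_one fun k =>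
        |(∑ i ∈ Finset.univ.filter (fun i : Fin n => (i : ℕ) < k), p i) -
          ((∑ i, p i) - ∑ i ∈ Finset.univ.filter (fun i : Fin n => (i : ℕ) < k), p i)|) / s
      ≤ P + |S1 - (P - S1)| / s := by
        apply add_le_add_right
        exact div_le_div_of_nonneg_right hinf hs0.le
    _ ≤ C := by linarith
end

section
/- In the Partition-reduction instance for two reclaimers (pad length 6B, travel speed s = 5B, stockpiles of lengths a_1,…,a_m on [2B,4B] plus two stockpiles [0,2B] and [4B,6B]), if there is no index set I with Σ_{i∈I} a_i = B, then in any partition of the stockpiles between the two reclaimers, one reclaimer has total reclaim time at least 3B + 1. -/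
/-- In the Partition-reduction instance (small stockpiles of lengths `a i` summing to
`2B` plus two stockpiles of length `2B`), if there is no index set `I` with
`∑_{i ∈ I} a i = B`, then in any partition of the stockpiles between the two
reclaimers one reclaimer has total reclaim time at least `3B + 1`. -/
theorem stmt12 (m B : ℕ) (a : Fin m → ℕ) (ha : ∀ i, 0 < a i)
    (hsum : ∑ i, a i = 2 * B)
    (hno : ¬ ∃ I : Finset (Fin m), ∑ i ∈ I, a i = B) :
    ∀ S : Finset (Fin m ⊕ Fin 2),
      3 * B + 1 ≤ max (∑ i ∈ S, Sum.elim a (fun _ => 2 * B) i)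
                      (∑ i ∈ Sᶜ, Sum.elim a (fun _ => 2 * B) i) := by
  intro S
  have hB : B ≠ 0 := fun h => hno ⟨∅, by simp [h]⟩
  push_neg at hno
  by_contra hlt
  push_neg at hlt
  rw [max_lt_iff] at hlt
  obtain ⟨h1, h2⟩ := hlt
  -- total sum
  have htot : (∑ i ∈ S, Sum.elim a (fun _ => 2 * B) i)
      + (∑ i ∈ Sᶜ, Sum.elim a (fun _ => 2 * B) i) = 6 * B := by
    rw [Finset.sum_add_sum_compl]
    rw [Fintype.sum_sum_type]
    simp [hsum, Fin.sum_univ_two]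
    ring
  -- decompose S sum
  set f : Fin m ⊕ Fin 2 → ℕ := Sum.elim a (fun _ => 2 * B) with hf
  have hdec : ∑ i ∈ S, f i
      = (∑ i ∈ Finset.univ.filter (fun i => Sum.inl i ∈ S), a i)
        + ((if Sum.inr 0 ∈ S then 2 * B else 0) + (if Sum.inr 1 ∈ S then 2 * B else 0)) := by
    rw [show (∑ i ∈ S, f i) = ∑ i : Fin m ⊕ Fin 2, if i ∈ S then f i else 0 by
      rw [Finset.sum_ite_mem, Finset.univ_inter]]
    rw [Fintype.sum_sum_type]
    simp [Fin.sum_univ_two, Finset.sum_filter, hf]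
  have hIle : ∑ i ∈ Finset.univ.filter (fun i => Sum.inl i ∈ S), a i ≤ 2 * B := by
    rw [← hsum]
    exact Finset.sum_le_sum_of_subset (Finset.subset_univ _)
  have hIne := hno (Finset.univ.filter (fun i => Sum.inl i ∈ S))
  split_ifs at hdec <;> omega
end
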